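/- Let σ be a finite Borel measure on the unit sphere S² ⊆ ℝ³ with σ(S²) > 0 that assigns positive measure to every nonempty relatively open subset of S², let ȳ : S² → ℝ^m be continuous, and let α ≥ 0. Set y_a = (1/σ(S²)) ∫_{S²} ȳ(u) dσ(u) and y̆(u) = ȳ(u) + α·y_a. Define C_α = { t·∫_{S²} f(u)·ȳ(u) dσ(u) : t ≥ 0, f = f_d + α/σ(S²) (as a function on S²) where f_d : S² → ℝ is nonnegative, σ-integrable, and ∫_{S²} f_d dσ ≤ 1 }. Then the closure of C_α equals the closure of the conic hull of { y̆(u) : u ∈ S² }. -/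

import Mathlib

open MeasureTheory

/-- The unit sphere S² in ℝ³, as a subtype. -/
abbrev Sphere2 : Type := Metric.sphere (0 : EuclideanSpace ℝ (Fin 3)) 1

/-- The conic hull of a set `A`: all finite nonnegative combinations of elements of `A`. -/
def conicHull {m : ℕ} (A : Set (EuclideanSpace ℝ (Fin m))) : Set (EuclideanSpace ℝ (Fin m)) :=
  {y | ∃ (k : ℕ) (c : Fin k → ℝ) (a : Fin k → EuclideanSpace ℝ (Fin m)),
      (∀ i, 0 ≤ c i) ∧ (∀ i, a i ∈ A) ∧ y = ∑ i, c i • a i}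

/-- The cone `C_α` of (nonnegative multiples of) images under illuminations consisting of an
ambient component of strength `α` plus a nonnegative directional component of total mass ≤ 1. -/
def ambientCone {m : ℕ} (σ : Measure Sphere2) (ybar : Sphere2 → EuclideanSpace ℝ (Fin m))
    (α : ℝ) : Set (EuclideanSpace ℝ (Fin m)) :=
  {y | ∃ (t : ℝ) (fd : Sphere2 → ℝ), 0 ≤ t ∧ (∀ u, 0 ≤ fd u) ∧ Integrable fd σ ∧
      (∫ u, fd u ∂σ) ≤ 1 ∧
      y = t • ∫ u, (fd u + α / (σ Set.univ).toReal) • ybar u ∂σ}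

namespace StmtAux

instance : Nonempty Sphere2 :=
  Set.nonempty_coe_sort.mpr (NormedSpace.sphere_nonempty.mpr zero_le_one)

variable {m : ℕ}

lemma zero_mem_conicHull (A : Set (EuclideanSpace ℝ (Fin m))) : 0 ∈ conicHull A :=
  ⟨0, Fin.elim0, Fin.elim0, fun i => i.elim0, fun i => i.elim0, by simp⟩

lemma mem_conicHull_of_mem {A : Set (EuclideanSpace ℝ (Fin m))} {a} (ha : a ∈ A) :
    a ∈ conicHull A :=
  ⟨1, fun _ => 1, fun _ => a, fun _ => zero_le_one, fun _ => ha, by simp⟩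

lemma smul_mem_conicHull {A : Set (EuclideanSpace ℝ (Fin m))} {t : ℝ} (ht : 0 ≤ t) {y}
    (hy : y ∈ conicHull A) : t • y ∈ conicHull A := by
  obtain ⟨k, c, a, hc, ha, rfl⟩ := hy
  refine ⟨k, fun i => t * c i, a, fun i => mul_nonneg ht (hc i), ha, ?_⟩
  rw [Finset.smul_sum]
  exact Finset.sum_congr rfl fun i _ => (mul_smul t (c i) (a i)).symm

lemma add_mem_conicHull {A : Set (EuclideanSpace ℝ (Fin m))} {y z}
    (hy : y ∈ conicHull A) (hz : z ∈ conicHull A) : y + z ∈ conicHull A := by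
  obtain ⟨k, c, a, hc, ha, rfl⟩ := hy
  obtain ⟨l, d, b, hd, hb, rfl⟩ := hz
  refine ⟨k + l, Fin.append c d, Fin.append a b, fun i => ?_, fun i => ?_, ?_⟩
  · exact Fin.addCases (fun j => by simpa [Fin.append_left] using hc j)
      (fun j => by simpa [Fin.append_right] using hd j) i
  · exact Fin.addCases (fun j => by simpa [Fin.append_left] using ha j)
      (fun j => by simpa [Fin.append_right] using hb j) i
  · rw [Fin.sum_univ_add]
    simp [Fin.append_left, Fin.append_right]

lemma convex_conicHull (A : Set (EuclideanSpace ℝ (Fin m))) : Convex ℝ (conicHull A) :=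
  fun _ hx _ hy _ _ ha hb _ =>
    add_mem_conicHull (smul_mem_conicHull ha hx) (smul_mem_conicHull hb hy)

lemma closure_smul_mem {A : Set (EuclideanSpace ℝ (Fin m))}
    (hA : ∀ ⦃t : ℝ⦄, 0 ≤ t → ∀ ⦃y⦄, y ∈ A → t • y ∈ A) {t : ℝ} (ht : 0 ≤ t) {y}
    (hy : y ∈ closure A) : t • y ∈ closure A := by
  obtain ⟨v, hv, hvl⟩ := mem_closure_iff_seq_limit.mp hy
  exact mem_closure_iff_seq_limit.mpr
    ⟨fun n => t • v n, fun n => hA ht (hv n), hvl.const_smul t⟩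

lemma closure_add_mem {A : Set (EuclideanSpace ℝ (Fin m))}
    (hA : ∀ ⦃x⦄, x ∈ A → ∀ ⦃y⦄, y ∈ A → x + y ∈ A) {x y}
    (hx : x ∈ closure A) (hy : y ∈ closure A) : x + y ∈ closure A := by
  obtain ⟨u, hu, hul⟩ := mem_closure_iff_seq_limit.mp hx
  obtain ⟨v, hv, hvl⟩ := mem_closure_iff_seq_limit.mp hy
  exact mem_closure_iff_seq_limit.mpr
    ⟨fun n => u n + v n, fun n => hA (hu n) (hv n), hul.add hvl⟩

variable (σ : Measure Sphere2) [IsFiniteMeasure σ]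

lemma integrable_smul_cont {f : Sphere2 → ℝ} (hf : Integrable f σ)
    {g : Sphere2 → EuclideanSpace ℝ (Fin m)} (hg : Continuous g) :
    Integrable (fun u => f u • g u) σ := by
  obtain ⟨x, -, hx⟩ := isCompact_univ.exists_isMaxOn Set.univ_nonempty hg.norm.continuousOn
  refine Integrable.mono' (hf.norm.const_mul ‖g x‖)
    (hf.aestronglyMeasurable.smul hg.aestronglyMeasurable) ?_
  filter_upwards with u
  rw [norm_smul, mul_comm]
  exact mul_le_mul_of_nonneg_right (hx (Set.mem_univ u)) (norm_nonneg _)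

lemma integrable_cont {g : Sphere2 → EuclideanSpace ℝ (Fin m)} (hg : Continuous g) :
    Integrable g σ := by
  have := integrable_smul_cont σ (integrable_const (1 : ℝ)) hg
  simpa using this

lemma int_expand {f : Sphere2 → ℝ} (hf : Integrable f σ) (c : ℝ)
    {g : Sphere2 → EuclideanSpace ℝ (Fin m)} (hg : Continuous g) :
    ∫ u, (f u + c) • g u ∂σ = (∫ u, f u • g u ∂σ) + c • ∫ u, g u ∂σ := by
  have e : (fun u => (f u + c) • g u) = fun u => f u • g u + c • g u := by
    funext u; rw [add_smul]
  rw [e, integral_add (integrable_smul_cont σ hf hg)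
    (integrable_smul_cont σ (integrable_const c) hg), integral_smul]

lemma zero_mem_ambientCone (ybar : Sphere2 → EuclideanSpace ℝ (Fin m)) (α : ℝ) :
    0 ∈ ambientCone σ ybar α :=
  ⟨0, fun _ => 0, le_rfl, fun _ => le_rfl, integrable_const 0, by simp, by simp⟩

lemma smul_mem_ambientCone {ybar : Sphere2 → EuclideanSpace ℝ (Fin m)} {α : ℝ}
    {t : ℝ} (ht : 0 ≤ t) {x} (hx : x ∈ ambientCone σ ybar α) :
    t • x ∈ ambientCone σ ybar α := by
  obtain ⟨t', f, h1, h2, h3, h4, rfl⟩ := hx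
  exact ⟨t * t', f, mul_nonneg ht h1, h2, h3, h4, by rw [smul_smul]⟩

lemma add_mem_ambientCone {ybar : Sphere2 → EuclideanSpace ℝ (Fin m)}
    (hy : Continuous ybar) {α : ℝ} {x y}
    (hx : x ∈ ambientCone σ ybar α) (hx' : y ∈ ambientCone σ ybar α) :
    x + y ∈ ambientCone σ ybar α := by
  obtain ⟨t1, f1, ht1, hf10, hf1i, hf1le, rfl⟩ := hx
  obtain ⟨t2, f2, ht2, hf20, hf2i, hf2le, rfl⟩ := hx'
  rcases eq_or_lt_of_le (add_nonneg ht1 ht2) with hT | hT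
  · have h1 : t1 = 0 := by linarith
    have h2 : t2 = 0 := by linarith
    simpa [h1, h2] using zero_mem_ambientCone σ ybar α
  · refine ⟨t1 + t2, fun u => (t1 * f1 u + t2 * f2 u) / (t1 + t2), add_nonneg ht1 ht2,
      fun u => div_nonneg (add_nonneg (mul_nonneg ht1 (hf10 u)) (mul_nonneg ht2 (hf20 u)))
        hT.le, ((hf1i.const_mul t1).add (hf2i.const_mul t2)).div_const _, ?_, ?_⟩
    · rw [integral_div, integral_add (hf1i.const_mul t1) (hf2i.const_mul t2),
        integral_const_mul, integral_const_mul, div_le_one hT]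
      have h1 := mul_le_mul_of_nonneg_left hf1le ht1
      have h2 := mul_le_mul_of_nonneg_left hf2le ht2
      linarith
    · have hint : Integrable (fun u => (t1 * f1 u + t2 * f2 u) / (t1 + t2)) σ :=
        ((hf1i.const_mul t1).add (hf2i.const_mul t2)).div_const _
      have key : ∫ u, ((t1 * f1 u + t2 * f2 u) / (t1 + t2)) • ybar u ∂σ
          = (t1 + t2)⁻¹ • (t1 • ∫ u, f1 u • ybar u ∂σ + t2 • ∫ u, f2 u • ybar u ∂σ) := by
        have e : (fun u => ((t1 * f1 u + t2 * f2 u) / (t1 + t2)) • ybar u)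
            = fun u => (t1 + t2)⁻¹ • ((t1 * f1 u) • ybar u + (t2 * f2 u) • ybar u) := by
          funext u
          rw [div_eq_inv_mul, mul_smul, add_smul, smul_add]
        have e1 : (fun u => (t1 * f1 u) • ybar u) = fun u => t1 • (f1 u • ybar u) := by
          funext u; rw [mul_smul]
        have e2 : (fun u => (t2 * f2 u) • ybar u) = fun u => t2 • (f2 u • ybar u) := by
          funext u; rw [mul_smul]
        rw [e, integral_smul,
          integral_add (integrable_smul_cont σ (hf1i.const_mul t1) hy)
            (integrable_smul_cont σ (hf2i.const_mul t2) hy),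
          e1, e2, integral_smul, integral_smul]
      beta_reduce
      rw [int_expand σ hint (α / (σ Set.univ).toReal) hy,
        int_expand σ hf1i (α / (σ Set.univ).toReal) hy,
        int_expand σ hf2i (α / (σ Set.univ).toReal) hy, key]
      have hTne : t1 + t2 ≠ 0 := hT.ne'
      match_scalars <;> field_simp <;> ring

end StmtAux

open StmtAux

theorem stmt4 {m : ℕ} (σ : Measure Sphere2) [IsFiniteMeasure σ]
    (hσpos : 0 < σ Set.univ)
    (hσ : ∀ U : Set Sphere2, IsOpen U → U.Nonempty → 0 < σ U)
    (ybar : Sphere2 → EuclideanSpace ℝ (Fin m)) (hy : Continuous ybar)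
    (α : ℝ) (hα : 0 ≤ α) :
    closure (ambientCone σ ybar α)
      = closure (conicHull (Set.range fun u =>
          ybar u + α • ((σ Set.univ).toReal⁻¹ • ∫ u', ybar u' ∂σ))) := by
  have hS : 0 < (σ Set.univ).toReal := ENNReal.toReal_pos hσpos.ne' (measure_ne_top σ _)
  set yint : EuclideanSpace ℝ (Fin m) := ∫ u', ybar u' ∂σ with hyintdef
  set ya : EuclideanSpace ℝ (Fin m) := (σ Set.univ).toReal⁻¹ • yint with hyadef
  set yb : Sphere2 → EuclideanSpace ℝ (Fin m) := fun u => ybar u + α • ya with hybdef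
  have hybc : Continuous yb := hy.add continuous_const
  apply Set.Subset.antisymm
  · -- ambientCone ⊆ closure conicHull
    refine closure_minimal ?_ isClosed_closure
    rintro y ⟨t, fd, ht, hfd0, hfdi, hfdle, rfl⟩
    have hz : (∫ u, (fd u + α / (σ Set.univ).toReal) • ybar u ∂σ)
        ∈ closure (conicHull (Set.range yb)) := by
      by_contra hz
      obtain ⟨ℓ, r, hr1, hr2⟩ := geometric_hahn_banach_closed_point
        (convex_conicHull (Set.range yb)).closure isClosed_closure hz
      have h0 : (0 : ℝ) < r := by
        have := hr1 0 (subset_closure (zero_mem_conicHull _))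
        simpa using this
      have hle : ∀ a ∈ conicHull (Set.range yb), ℓ a ≤ 0 := by
        intro a ha
        by_contra hpos
        push_neg at hpos
        have hs : (0 : ℝ) ≤ (r + 1) / ℓ a := le_of_lt (div_pos (by linarith) hpos)
        have h2 := hr1 _ (subset_closure (smul_mem_conicHull hs ha))
        rw [_root_.map_smul, smul_eq_mul, div_mul_cancel₀ _ hpos.ne'] at h2
        linarith
      have hyb : ∀ u, ℓ (yb u) ≤ 0 := fun u => hle _ (mem_conicHull_of_mem ⟨u, rfl⟩)
      set c₀ : ℝ := (1 - ∫ u, fd u ∂σ) * α / ((1 + α) * (σ Set.univ).toReal) with hc₀def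
      have hc₀ : 0 ≤ c₀ := by
        apply div_nonneg (mul_nonneg (by linarith) hα)
        positivity
      have hfdc : Integrable (fun u => fd u + c₀) σ := hfdi.add (integrable_const c₀)
      have hInt : Integrable (fun u => (fd u + c₀) • yb u) σ :=
        integrable_smul_cont σ hfdc hybc
      have hzeq : (∫ u, (fd u + α / (σ Set.univ).toReal) • ybar u ∂σ)
          = ∫ u, (fd u + c₀) • yb u ∂σ := by
        have e1 : (fun u => (fd u + c₀) • yb u)
            = fun u => (fd u + c₀) • ybar u + (fd u + c₀) • (α • ya) := by
          funext u; simp only [hybdef]; rw [smul_add]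
        rw [e1, integral_add (integrable_smul_cont σ hfdc hy)
            (hfdc.smul_const _),
          int_expand σ hfdi c₀ hy, integral_smul_const,
          integral_add hfdi (integrable_const c₀), integral_const,
          int_expand σ hfdi (α / (σ Set.univ).toReal) hy, hyadef, hc₀def]
        have hSne : (σ Set.univ).toReal ≠ 0 := hS.ne'
        have h1α : (1 : ℝ) + α ≠ 0 := by linarith
        match_scalars <;> simp only [smul_eq_mul, measureReal_def] <;> field_simp <;> ring
      have hcontr : ℓ (∫ u, (fd u + c₀) • yb u ∂σ) ≤ 0 := by
        rw [← ContinuousLinearMap.integral_comp_comm ℓ hInt]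
        apply integral_nonpos
        intro u
        simp only [_root_.map_smul, smul_eq_mul, Pi.zero_apply]
        have := mul_le_mul_of_nonneg_left (hyb u) (add_nonneg (hfd0 u) hc₀)
        simpa using this
      rw [hzeq] at hr2
      linarith
    exact closure_smul_mem (fun t ht y hy => smul_mem_conicHull ht hy) ht hz
  · -- conicHull ⊆ closure ambientCone
    refine closure_minimal ?_ isClosed_closure
    rintro y ⟨k, ci, ai, hci, hai, rfl⟩
    refine Finset.sum_induction _ (· ∈ closure (ambientCone σ ybar α))
      (fun a b ha hb => closure_add_mem (fun x hx' y' hy' => add_mem_ambientCone σ hy hx' hy') ha hb)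
      (subset_closure (zero_mem_ambientCone σ ybar α)) (fun i _ => ?_)
    obtain ⟨u₀, hu₀⟩ := hai i
    rw [← hu₀]
    refine closure_smul_mem (fun t ht x hx => smul_mem_ambientCone σ ht hx) (hci i) ?_
    -- yb u₀ ∈ closure (ambientCone σ ybar α)
    rw [Metric.mem_closure_iff]
    intro ε hε
    obtain ⟨δ, hδpos, hδ⟩ := Metric.continuous_iff.mp hy u₀ (ε / 2) (by linarith)
    set U : Set Sphere2 := Metric.ball u₀ δ with hUdef
    have hUmeas : MeasurableSet U := Metric.isOpen_ball.measurableSet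
    have hU : 0 < σ U := hσ U Metric.isOpen_ball ⟨u₀, Metric.mem_ball_self hδpos⟩
    set ν : ℝ := (σ U).toReal with hνdef
    have hν : 0 < ν := ENNReal.toReal_pos hU.ne' (measure_ne_top σ U)
    set fd : Sphere2 → ℝ := U.indicator (fun _ => ν⁻¹) with hfddef
    have hfd0 : ∀ u, 0 ≤ fd u := fun u =>
      Set.indicator_nonneg (fun _ _ => inv_nonneg.mpr hν.le) u
    have hfdi : Integrable fd σ := (integrable_const (ν⁻¹)).indicator hUmeas
    have hfdint : ∫ u, fd u ∂σ = 1 := by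
      rw [hfddef]
      rw [integral_indicator hUmeas, setIntegral_const, smul_eq_mul, measureReal_def, ← hνdef, mul_inv_cancel₀ hν.ne']
    refine ⟨∫ u, (fd u + α / (σ Set.univ).toReal) • ybar u ∂σ,
      ⟨1, fd, zero_le_one, hfd0, hfdi, le_of_eq hfdint, (one_smul _ _).symm⟩, ?_⟩
    have hb : (∫ u, (fd u + α / (σ Set.univ).toReal) • ybar u ∂σ)
        = (∫ u, fd u • ybar u ∂σ) + α • ya := by
      rw [int_expand σ hfdi _ hy, hyadef, smul_smul, div_eq_mul_inv]
    rw [hb]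
    have e : (fun u => fd u • ybar u) = U.indicator (fun u => ν⁻¹ • ybar u) := by
      funext u
      by_cases h : u ∈ U
      · simp [hfddef, Set.indicator_of_mem h]
      · simp [hfddef, Set.indicator_of_notMem h]
    have hIU : (∫ u, fd u • ybar u ∂σ) = ν⁻¹ • ∫ u in U, ybar u ∂σ := by
      rw [e, integral_indicator hUmeas, integral_smul]
    have e2 : ybar u₀ = ν⁻¹ • ∫ _ in U, (ybar u₀) ∂σ := by
      rw [setIntegral_const, smul_smul, measureReal_def, hνdef, inv_mul_cancel₀ hν.ne', one_smul]
    have key : dist (ybar u₀) (∫ u, fd u • ybar u ∂σ) ≤ ε / 2 := by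
      rw [hIU, dist_eq_norm]
      have : ybar u₀ - ν⁻¹ • ∫ u in U, ybar u ∂σ
          = ν⁻¹ • ∫ u in U, (ybar u₀ - ybar u) ∂σ := by
        rw [integral_sub (integrableOn_const (C := ybar u₀) (measure_ne_top σ U))
          ((integrable_cont σ hy).integrableOn), smul_sub, ← e2]
      rw [this, norm_smul, Real.norm_eq_abs, abs_of_pos (inv_pos.mpr hν)]
      have hbd : ‖∫ u in U, (ybar u₀ - ybar u) ∂σ‖ ≤ (ε / 2) * ν := by
        refine norm_setIntegral_le_of_norm_le_const (measure_lt_top σ U) (fun u hu => ?_)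
        rw [← dist_eq_norm, dist_comm]
        exact le_of_lt (hδ u (Metric.mem_ball.mp hu))
      calc ν⁻¹ * ‖∫ u in U, (ybar u₀ - ybar u) ∂σ‖ ≤ ν⁻¹ * ((ε / 2) * ν) :=
            mul_le_mul_of_nonneg_left hbd (inv_nonneg.mpr hν.le)
        _ = ε / 2 := by field_simp
    calc dist (yb u₀) ((∫ u, fd u • ybar u ∂σ) + α • ya)
        = dist (ybar u₀) (∫ u, fd u • ybar u ∂σ) := by
          rw [hybdef]; exact dist_add_right _ _ _
      _ ≤ ε / 2 := key
      _ < ε := by linarith
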